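/- Let Ω = {z ∈ ℝˢ : q(z) ∈ Q}, where q: ℝˢ → ℝᵖ is twice differentiable at z̄ ∈ Ω, Q ⊂ ℝᵖ is closed and convex, and the mapping z ↦ q(z) − Q is metrically subregular at (z̄, 0). Let v ∈ T_Ω(z̄), λ ∈ N_Ω(z̄) (limiting normal cone) with ⟨λ,v⟩ = 0. Then the upper curvature satisfies χ̄_Ω(λ,z̄;v) ≤ −(1/2) sup{⟨∇²⟨μ,q⟩(z̄)v, v⟩ : μ ∈ N_Q(q(z̄)), λ = ∇q(z̄)*μ}. -/

import Mathlib

open Filter Topology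
open scoped RealInnerProductSpace

/-- The contingent (Bouligand) cone. -/
def contTangent {E : Type*} [NormedAddCommGroup E] [NormedSpace ℝ E]
    (Ω : Set E) (z : E) : Set E :=
  {u | ∃ (t : ℕ → ℝ) (w : ℕ → E), (∀ k, 0 < t k) ∧ Tendsto t atTop (𝓝 0) ∧
    Tendsto w atTop (𝓝 u) ∧ ∀ k, z + t k • w k ∈ Ω}

/-- The regular (Fréchet) normal cone: the polar of the contingent cone. -/
def regNormal {E : Type*} [NormedAddCommGroup E] [InnerProductSpace ℝ E]
    (Ω : Set E) (z : E) : Set E :=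
  {v | ∀ u ∈ contTangent Ω z, ⟪v, u⟫ ≤ (0 : ℝ)}

/-- The limiting (Mordukhovich) normal cone. -/
def limNormal {E : Type*} [NormedAddCommGroup E] [InnerProductSpace ℝ E]
    (Ω : Set E) (z : E) : Set E :=
  {v | ∃ (zs vs : ℕ → E), (∀ k, zs k ∈ Ω) ∧ (∀ k, vs k ∈ regNormal Ω (zs k)) ∧
    Tendsto zs atTop (𝓝 z) ∧ Tendsto vs atTop (𝓝 v)}

/-- The upper curvature of a set. -/
noncomputable def upperCurv {E : Type*} [NormedAddCommGroup E] [InnerProductSpace ℝ E]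
    (Ω : Set E) (lam z v : E) : EReal :=
  ⨅ ε : {ε : ℝ // 0 < ε},
    sSup {r : EReal | ∃ (τ : ℝ) (v' : E), 0 < τ ∧ τ < ε.1 ∧ ‖v' - v‖ < ε.1 ∧
      z + τ • v' ∈ Ω ∧ r = ((⟪lam, v' - v⟫ / τ : ℝ) : EReal)}

private lemma ereal_le_coe_of_forall {x : EReal} {L : ℝ}
    (h : ∀ δ : ℝ, 0 < δ → x ≤ ((L + δ : ℝ) : EReal)) : x ≤ (L : EReal) := by
  induction x with
  | bot => exact bot_le
  | coe y =>
    rw [EReal.coe_le_coe_iff]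
    by_contra hc
    push_neg at hc
    have := h ((y - L)/2) (by linarith)
    rw [EReal.coe_le_coe_iff] at this
    linarith
  | top =>
    have := h 1 one_pos
    exact absurd (top_le_iff.mp this) (EReal.coe_ne_top _)

private lemma taylor2 {E F : Type*} [NormedAddCommGroup E] [NormedSpace ℝ E]
    [NormedAddCommGroup F] [NormedSpace ℝ F] {q : E → F} {zb : E}
    (hd1 : ∀ᶠ z in 𝓝 zb, DifferentiableAt ℝ q z)
    (hd2 : DifferentiableAt ℝ (fderiv ℝ q) zb) {η : ℝ} (hη : 0 < η) :
    ∃ ρ > 0, ∀ h : E, ‖h‖ < ρ →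
      ‖q (zb + h) - q zb - fderiv ℝ q zb h -
        (1/2 : ℝ) • (fderiv ℝ (fderiv ℝ q) zb h) h‖ ≤ η * ‖h‖^2 := by
  set A := fderiv ℝ q zb with hA
  set B := fderiv ℝ (fderiv ℝ q) zb with hBdef
  have hB : HasFDerivAt (fderiv ℝ q) B zb := hd2.hasFDerivAt
  have hsym : ∀ a b, B a b = B b a := by
    intro a b
    exact second_derivative_symmetric_of_eventually
      (hd1.mono fun z hz => hz.hasFDerivAt) hB a b
  -- littleO bound on derivative differences
  have hlo : (fun h => fderiv ℝ q (zb + h) - A - B h) =o[𝓝 0] fun h => h := by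
    rw [hasFDerivAt_iff_isLittleO_nhds_zero] at hB
    exact hB
  have hev : ∀ᶠ h in (𝓝 (0:E)),
      ‖fderiv ℝ q (zb + h) - A - B h‖ ≤ η * ‖h‖ ∧ DifferentiableAt ℝ q (zb + h) := by
    have h1 := hlo.def hη
    have h2 : ∀ᶠ h in (𝓝 (0:E)), DifferentiableAt ℝ q (zb + h) := by
      have : Tendsto (fun h : E => zb + h) (𝓝 0) (𝓝 zb) := by
        simpa using (continuous_add_left zb).tendsto (0:E)
      exact this.eventually hd1
    filter_upwards [h1, h2] with h hh1 hh2
    exact ⟨hh1, hh2⟩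
  rw [Metric.eventually_nhds_iff] at hev
  obtain ⟨ρ, hρ, hball⟩ := hev
  refine ⟨ρ, hρ, fun h₀ hh₀ => ?_⟩
  set g : E → F := fun h => q (zb + h) - A h - (1/2 : ℝ) • (B h) h with hgdef
  set s : Set E := Metric.closedBall (0:E) ‖h₀‖ with hsdef
  have hsub : ∀ x ∈ s, ‖x‖ ≤ ‖h₀‖ := by
    intro x hx
    simpa [hsdef, Metric.mem_closedBall, dist_zero_right] using hx
  have hg : ∀ x ∈ s, HasFDerivWithinAt g (fderiv ℝ q (zb + x) - A - B x) s x := by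
    intro x hx
    have hxρ : dist x (0:E) < ρ := by
      rw [dist_zero_right]; exact lt_of_le_of_lt (hsub x hx) hh₀
    have hdx := (hball hxρ).2
    have h1 : HasFDerivAt (fun h => q (zb + h)) (fderiv ℝ q (zb + x)) x := by
      have := hdx.hasFDerivAt.comp x ((hasFDerivAt_id x).const_add zb)
      simpa [Function.comp_def] using this
    have h2 : HasFDerivAt (fun h : E => (1/2 : ℝ) • (B h) h) (B x) x := by
      have hc : HasFDerivAt (fun h : E => B h) B x := B.hasFDerivAt
      have hu : HasFDerivAt (fun h : E => h) (ContinuousLinearMap.id ℝ E) x :=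
        hasFDerivAt_id x
      have := (hc.clm_apply hu).const_smul (1/2 : ℝ)
      convert this using 1
      · rfl
      ext k
      have e := hsym x k
      simp only [ContinuousLinearMap.smul_apply, ContinuousLinearMap.add_apply,
        ContinuousLinearMap.comp_apply, ContinuousLinearMap.id_apply,
        ContinuousLinearMap.flip_apply]
      rw [e]; module
    exact ((h1.sub (A.hasFDerivAt (x := x))).sub h2).hasFDerivWithinAt
  have hbound : ∀ x ∈ s, ‖fderiv ℝ q (zb + x) - A - B x‖ ≤ η * ‖h₀‖ := by
    intro x hx
    have hxρ : dist x (0:E) < ρ := by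
      rw [dist_zero_right]; exact lt_of_le_of_lt (hsub x hx) hh₀
    refine le_trans (hball hxρ).1 ?_
    exact mul_le_mul_of_nonneg_left (hsub x hx) hη.le
  have h0s : (0:E) ∈ s := Metric.mem_closedBall_self (norm_nonneg _)
  have h₀s : h₀ ∈ s := by simp [hsdef, Metric.mem_closedBall, dist_zero_right]
  have this : ‖g h₀ - g 0‖ ≤ η * ‖h₀‖ * ‖h₀ - 0‖ :=
    (convex_closedBall (0:E) ‖h₀‖).norm_image_sub_le_of_norm_hasFDerivWithin_le
      hg hbound h0s h₀s
  have hg0 : g 0 = q zb := by simp [hgdef]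
  rw [hg0, sub_zero] at this
  calc ‖q (zb + h₀) - q zb - A h₀ - (1/2 : ℝ) • (B h₀) h₀‖
      = ‖g h₀ - q zb‖ := by rw [hgdef]; congr 1; dsimp only; abel
    _ ≤ η * ‖h₀‖ * ‖h₀‖ := this
    _ = η * ‖h₀‖^2 := by ring

private lemma key_lemma {E F : Type*} [NormedAddCommGroup E] [InnerProductSpace ℝ E]
    [NormedAddCommGroup F] [InnerProductSpace ℝ F] [CompleteSpace E] [CompleteSpace F]
    {q : E → F} {Q : Set F} {zb : E} 
    (hd1 : ∀ᶠ z in 𝓝 zb, DifferentiableAt ℝ q z)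
    (hd2 : DifferentiableAt ℝ (fderiv ℝ q) zb)
    {v lam : E} (horth : ⟪lam, v⟫ = (0 : ℝ))
    (μ : F) (hμQ : ∀ d ∈ Q, ⟪μ, d - q zb⟫ ≤ (0:ℝ))
    (hμA : lam = (ContinuousLinearMap.adjoint (fderiv ℝ q zb)) μ) :
    upperCurv (q ⁻¹' Q) lam zb v
      ≤ ((-(⟪μ, (fderiv ℝ (fderiv ℝ q) zb v) v⟫ / 2) : ℝ) : EReal) := by
  set A := fderiv ℝ q zb with hA
  set B := fderiv ℝ (fderiv ℝ q) zb with hBdef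
  apply ereal_le_coe_of_forall
  intro δ hδ
  have hη : (0:ℝ) < δ / (2 * (‖μ‖ + 1) * (‖v‖ + 1)^2) := by positivity
  set η := δ / (2 * (‖μ‖ + 1) * (‖v‖ + 1)^2) with hηdef
  obtain ⟨ρ, hρ, htay⟩ := taylor2 hd1 hd2 hη
  set D := ‖μ‖ * ‖B‖ * (2*‖v‖+1) with hDdef
  have hD : 0 ≤ D := by positivity
  set ε := min 1 (min (ρ / (‖v‖ + 1)) (δ / (D + 1))) with hεdef
  have hε : 0 < ε := by
    refine lt_min one_pos (lt_min ?_ ?_) <;> positivity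
  refine le_trans (iInf_le _ ⟨ε, hε⟩) (sSup_le ?_)
  rintro r ⟨τ, v', hτ, hτε, hv'ε, hmem, rfl⟩
  rw [EReal.coe_le_coe_iff]
  have hε1 : ε ≤ 1 := min_le_left _ _
  have hερ : ε ≤ ρ / (‖v‖+1) := le_trans (min_le_right _ _) (min_le_left _ _)
  have hεδ : ε ≤ δ / (D+1) := le_trans (min_le_right _ _) (min_le_right _ _)
  have hn : ‖v'‖ ≤ ‖v‖ + 1 := by
    have h1 : ‖v'‖ ≤ ‖v‖ + ‖v' - v‖ := by
      calc ‖v'‖ = ‖v + (v' - v)‖ := by congr 1; abel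
        _ ≤ ‖v‖ + ‖v' - v‖ := norm_add_le _ _
    linarith
  have hhnorm : ‖τ • v'‖ < ρ := by
    rw [norm_smul, Real.norm_eq_abs, abs_of_pos hτ]
    have h1 : τ * ‖v'‖ ≤ τ * (‖v‖+1) := mul_le_mul_of_nonneg_left hn hτ.le
    have h2 : τ * (‖v‖+1) < ε * (‖v‖+1) :=
      mul_lt_mul_of_pos_right hτε (by positivity)
    have h3 : ε * (‖v‖+1) ≤ ρ := (le_div_iff₀ (by positivity)).mp hερ
    linarith
  have hT := htay (τ • v') hhnorm
  set w := q (zb + τ • v') - q zb - A (τ • v') - (1/2:ℝ) • (B (τ • v')) (τ • v')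
    with hwdef
  have hμw : |⟪μ, w⟫| ≤ ‖μ‖ * (η * ‖τ • v'‖^2) :=
    le_trans (abs_real_inner_le_norm μ w) (mul_le_mul_of_nonneg_left hT (norm_nonneg μ))
  have hQ0 : ⟪μ, q (zb + τ • v') - q zb⟫ ≤ 0 := hμQ _ hmem
  have hdec : ⟪μ, q (zb + τ • v') - q zb⟫
      = ⟪μ, w⟫ + τ * ⟪μ, A v'⟫ + (1/2) * (τ^2 * ⟪μ, B v' v'⟫) := by
    have h1 : q (zb + τ • v') - q zb
        = w + A (τ • v') + (1/2:ℝ) • (B (τ • v')) (τ • v') := by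
      rw [hwdef]; abel
    rw [h1, inner_add_right, inner_add_right]
    have h2 : A (τ • v') = τ • A v' := A.map_smul τ v'
    have h3 : (B (τ • v')) (τ • v') = (τ^2) • (B v') v' := by
      rw [B.map_smul, ContinuousLinearMap.smul_apply, (B v').map_smul, smul_smul]
      norm_num [pow_two]
    rw [h2, h3, real_inner_smul_right, real_inner_smul_right, real_inner_smul_right]
  have hnorm2 : ‖τ • v'‖^2 = τ^2 * ‖v'‖^2 := by
    rw [norm_smul, Real.norm_eq_abs, mul_pow, sq_abs]
  clear_value w ε η D A B
  have hmain : τ * ⟪μ, A v'⟫ + (1/2) * (τ^2 * ⟪μ, B v' v'⟫)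
      ≤ ‖μ‖ * η * (τ^2 * ‖v'‖^2) := by
    have hab := neg_abs_le (⟪μ, w⟫ : ℝ)
    rw [hnorm2] at hμw
    linarith [hQ0, hdec, hμw, hab]
  have hlamv' : ⟪lam, v' - v⟫ = ⟪μ, A v'⟫ := by
    rw [inner_sub_right, horth, sub_zero, hμA, ContinuousLinearMap.adjoint_inner_left]
  rw [hlamv', div_le_iff₀ hτ]
  have hcb : ⟪μ, B v v⟫ - ⟪μ, B v' v'⟫ ≤ D * ε := by
    have h1 : ⟪μ, B v v⟫ - ⟪μ, B v' v'⟫ = ⟪μ, (B v) v - (B v') v'⟫ :=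
      (inner_sub_right μ _ _).symm
    have h2 : (B v) v - (B v') v' = (B v) (v - v') + (B (v - v')) v' := by
      rw [map_sub (B v), map_sub B, ContinuousLinearMap.sub_apply]; abel
    have h3 : ‖(B v) v - (B v') v'‖ ≤ ‖B‖ * ‖v‖ * ‖v - v'‖ + ‖B‖ * ‖v - v'‖ * ‖v'‖ := by
      rw [h2]
      exact le_trans (norm_add_le _ _)
        (add_le_add (B.le_opNorm₂ v (v - v')) (B.le_opNorm₂ (v - v') v'))
    have h4 : ‖v - v'‖ < ε := by rw [norm_sub_rev]; exact hv'ε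
    have h5 : |⟪μ, (B v) v - (B v') v'⟫| ≤ ‖μ‖ * ‖(B v) v - (B v') v'‖ :=
      abs_real_inner_le_norm _ _
    have hBn : (0:ℝ) ≤ ‖B‖ := by positivity
    have hμn : (0:ℝ) ≤ ‖μ‖ := norm_nonneg _
    have hvn : (0:ℝ) ≤ ‖v‖ := norm_nonneg _
    rw [h1]
    have t1 : ⟪μ, (B v) v - (B v') v'⟫ ≤ ‖μ‖ * ‖(B v) v - (B v') v'‖ :=
      le_trans (le_abs_self _) h5
    have t2 : ‖μ‖ * ‖(B v) v - (B v') v'‖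
        ≤ ‖μ‖ * (‖B‖ * ‖v‖ * ‖v - v'‖ + ‖B‖ * ‖v - v'‖ * ‖v'‖) :=
      mul_le_mul_of_nonneg_left h3 hμn
    have t3 : ‖B‖ * ‖v‖ * ‖v - v'‖ ≤ ‖B‖ * ‖v‖ * ε :=
      mul_le_mul_of_nonneg_left h4.le (by positivity)
    have t4 : ‖B‖ * ‖v - v'‖ * ‖v'‖ ≤ (‖B‖ * ε) * (‖v‖ + 1) :=
      mul_le_mul (mul_le_mul_of_nonneg_left h4.le hBn) hn (norm_nonneg v')
        (by positivity)
    have t5 : ‖μ‖ * (‖B‖ * ‖v‖ * ‖v - v'‖ + ‖B‖ * ‖v - v'‖ * ‖v'‖)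
        ≤ ‖μ‖ * (‖B‖ * ‖v‖ * ε + (‖B‖ * ε) * (‖v‖ + 1)) :=
      mul_le_mul_of_nonneg_left (by linarith) hμn
    have t6 : ‖μ‖ * (‖B‖ * ‖v‖ * ε + (‖B‖ * ε) * (‖v‖ + 1)) = D * ε := by
      rw [hDdef]; ring
    linarith [t1, t2, t5, t6]
  have hDe : D * ε ≤ δ := by
    have h6 : ε * (D+1) ≤ δ := (le_div_iff₀ (by positivity)).mp hεδ
    linarith [h6, hε.le]
  have hsmall : ‖μ‖ * η * ‖v'‖^2 ≤ δ/2 := by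
    have h1 : ‖μ‖ * η * ‖v'‖^2 ≤ (‖μ‖+1) * η * (‖v‖+1)^2 := by
      have a1 : ‖μ‖ * η ≤ (‖μ‖+1) * η :=
        mul_le_mul_of_nonneg_right (by linarith [norm_nonneg μ]) hη.le
      have a2 : ‖v'‖^2 ≤ (‖v‖+1)^2 := pow_le_pow_left₀ (norm_nonneg v') hn 2
      exact mul_le_mul a1 a2 (pow_nonneg (norm_nonneg v') 2) (by positivity)
    have h2 : (‖μ‖+1) * η * (‖v‖+1)^2 = δ/2 := by
      rw [hηdef]; field_simp
    linarith
  have hstep : ⟪μ, A v'⟫ ≤ τ * (-(1/2)*⟪μ, B v' v'⟫ + ‖μ‖*η*‖v'‖^2) := by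
    have e1 : τ * ⟪μ, A v'⟫ ≤ τ * (τ * (-(1/2)*⟪μ, B v' v'⟫ + ‖μ‖*η*‖v'‖^2)) := by
      linarith [hmain]
    exact le_of_mul_le_mul_left e1 hτ
  have hX : -(1/2)*⟪μ, B v' v'⟫ + ‖μ‖*η*‖v'‖^2 ≤ -(⟪μ, B v v⟫/2) + δ := by
    linarith [hcb, hDe, hsmall]
  calc ⟪μ, A v'⟫ ≤ τ * (-(1/2)*⟪μ, B v' v'⟫ + ‖μ‖*η*‖v'‖^2) := hstep
    _ ≤ τ * (-(⟪μ, B v v⟫/2) + δ) := mul_le_mul_of_nonneg_left hX hτ.le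
    _ = (-(⟪μ, B v v⟫/2) + δ) * τ := mul_comm _ _

/-- upper-curvature estimate for preimages of convex sets under a
twice differentiable map with metrically subregular constraint mapping. -/
theorem upperCurv_le_of_subamenable {s p : ℕ}
    (q : EuclideanSpace ℝ (Fin s) → EuclideanSpace ℝ (Fin p))
    (Q : Set (EuclideanSpace ℝ (Fin p))) (hQc : IsClosed Q) (hQconv : Convex ℝ Q)
    (zb : EuclideanSpace ℝ (Fin s)) (hzb : q zb ∈ Q)
    (hd1 : ∀ᶠ z in 𝓝 zb, DifferentiableAt ℝ q z)
    (hd2 : DifferentiableAt ℝ (fderiv ℝ q) zb)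
    (κ : ℝ) (hκ : 0 ≤ κ)
    (hsubreg : ∀ᶠ z in 𝓝 zb,
      Metric.infDist z (q ⁻¹' Q) ≤ κ * Metric.infDist (q z) Q)
    (v : EuclideanSpace ℝ (Fin s)) (hv : v ∈ contTangent (q ⁻¹' Q) zb)
    (lam : EuclideanSpace ℝ (Fin s)) (hlam : lam ∈ limNormal (q ⁻¹' Q) zb)
    (horth : ⟪lam, v⟫ = (0 : ℝ)) :
    upperCurv (q ⁻¹' Q) lam zb v ≤
      -((1 / 2 : EReal) *
        sSup {r : EReal | ∃ μ : EuclideanSpace ℝ (Fin p),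
          (∀ d ∈ Q, ⟪μ, d - q zb⟫ ≤ (0 : ℝ)) ∧
          lam = (ContinuousLinearMap.adjoint (fderiv ℝ q zb)) μ ∧
          r = ((⟪μ, (fderiv ℝ (fderiv ℝ q) zb v) v⟫ : ℝ) : EReal)}) := by
  have h2pos : (0:EReal) < 2 := by norm_num
  have h2top : (2:EReal) ≠ ⊤ := by
    rw [show (2:EReal) = ((2:ℝ):EReal) by norm_cast]; exact EReal.coe_ne_top 2
  rw [show (1/2 : EReal) * sSup {r : EReal | ∃ μ : EuclideanSpace ℝ (Fin p),
          (∀ d ∈ Q, ⟪μ, d - q zb⟫ ≤ (0 : ℝ)) ∧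
          lam = (ContinuousLinearMap.adjoint (fderiv ℝ q zb)) μ ∧
          r = ((⟪μ, (fderiv ℝ (fderiv ℝ q) zb v) v⟫ : ℝ) : EReal)}
      = sSup {r : EReal | ∃ μ : EuclideanSpace ℝ (Fin p),
          (∀ d ∈ Q, ⟪μ, d - q zb⟫ ≤ (0 : ℝ)) ∧
          lam = (ContinuousLinearMap.adjoint (fderiv ℝ q zb)) μ ∧
          r = ((⟪μ, (fderiv ℝ (fderiv ℝ q) zb v) v⟫ : ℝ) : EReal)} / 2 from by
    rw [one_div, EReal.div_eq_inv_mul]]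
  apply EReal.le_neg_of_le_neg
  rw [EReal.div_le_iff_le_mul h2pos h2top]
  apply sSup_le
  rintro r ⟨μ, hμQ, hμA, rfl⟩
  rw [← EReal.div_le_iff_le_mul h2pos h2top]
  have hcoe : ((⟪μ, (fderiv ℝ (fderiv ℝ q) zb v) v⟫ : ℝ) : EReal) / 2
      = ((⟪μ, (fderiv ℝ (fderiv ℝ q) zb v) v⟫ / 2 : ℝ) : EReal) := by
    rw [EReal.coe_div]; norm_cast
  rw [hcoe]
  apply EReal.le_neg_of_le_neg
  rw [show -((⟪μ, (fderiv ℝ (fderiv ℝ q) zb v) v⟫ / 2 : ℝ) : EReal)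
      = ((-(⟪μ, (fderiv ℝ (fderiv ℝ q) zb v) v⟫ / 2) : ℝ) : EReal) from
    (EReal.coe_neg _).symm]
  exact key_lemma hd1 hd2 horth μ hμQ hμA
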